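/- Let G be a rectifiable space in which every point is a Gδ-point. Then every compact subset of G, with its diagonal being Gδ in the square of the subspace, is metrizable; in particular every compact subspace of a rectifiable space of countable pseudocharacter is metrizable. -/

import Mathlib

open Filter Topology

/-- Every compact subspace of a Hausdorff rectifiable space of
countable pseudocharacter is metrizable. -/
theorem stmt_13 {G : Type*} [TopologicalSpace G] [T2Space G]
    (p q : G → G → G)
    (hp : Continuous fun z : G × G => p z.1 z.2)
    (hq : Continuous fun z : G × G => q z.1 z.2)
    (e : G)
    (hpq : ∀ x y : G, p x (q x y) = y)
    (hqp : ∀ x y : G, q x (p x y) = y)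
    (hqe : ∀ x : G, q x x = e)
    (hqinj : ∀ x y : G, q x y = e → x = y)
    (hpsi : ∀ x : G, ∃ U : ℕ → Set G, (∀ n, IsOpen (U n)) ∧ {x} = ⋂ n, U n) :
    ∀ K : Set G, IsCompact K → TopologicalSpace.MetrizableSpace K := by
  intro K hK
  haveI : CompactSpace K := isCompact_iff_compactSpace.mp hK
  -- the map q restricted to K × K
  have hqc : Continuous fun z : K × K => q (z.1 : G) (z.2 : G) :=
    hq.comp ((continuous_subtype_val.comp continuous_fst).prodMk
      (continuous_subtype_val.comp continuous_snd))
  -- {e} is a Gδ set in G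
  obtain ⟨U, hUo, hUe⟩ := hpsi e
  -- the diagonal of K is a Gδ set in K × K
  have hdiag_eq : Set.diagonal K = (fun z : K × K => q (z.1 : G) (z.2 : G)) ⁻¹' {e} := by
    ext ⟨x, y⟩
    constructor
    · rintro (h : x = y)
      subst h
      exact hqe (x : G)
    · intro h
      exact Subtype.ext (hqinj _ _ h)
  have hdiag : IsGδ (Set.diagonal K) := by
    rw [hdiag_eq, show ({e} : Set G) = ⋂ n, U n from hUe, Set.preimage_iInter]
    exact .iInter_of_isOpen fun n => (hUo n).preimage hqc
  -- the diagonal is compact (closed in a compact space)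
  have hdiag_cpt : IsCompact (Set.diagonal K) := isClosed_diagonal.isCompact
  -- Urysohn: the diagonal is exactly the set where some continuous function equals 1
  obtain ⟨f, hf1, -, -, -⟩ :=
    exists_continuous_one_zero_of_isCompact_of_isGδ hdiag_cpt hdiag isClosed_empty
      (Set.disjoint_empty _)
  -- curry f gives a continuous injection K → C(K, ℝ)
  have hinj : Function.Injective f.curry := by
    intro x y hxy
    have hy : f (y, y) = 1 := by
      have : (y, y) ∈ f ⁻¹' {1} := by rw [← hf1]; exact rfl
      simpa using this
    have hxy' : f (x, y) = f (y, y) := by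
      have := congrArg (fun g : C(K, ℝ) => g y) hxy
      exact this
    have : (x, y) ∈ Set.diagonal K := by
      rw [hf1]
      simp [hxy', hy]
    exact this
  have hemb := (f.curry.continuous.isClosedEmbedding hinj).isEmbedding
  exact hemb.metrizableSpace
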